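/- Let Q ∈ ℝⁿˣⁿ be symmetric, c, a₁, …, a_m ∈ ℝⁿ, b_i, l_i, u_i ∈ ℝ with l_i ≤ u_i, σ > 0 and p > 2. Consider the extended p-regularized subproblem (p-RS_m): minimize (1/2) xᵀQx + cᵀx + (σ/p) ‖x‖^p over x ∈ ℝⁿ subject to l_i ≤ a_iᵀx + b_i ≤ u_i for i = 1, …, m; and its relaxation: minimize (1/2) xᵀ(Q − λ_min(Q) I_n) x + cᵀx + (σ/p) t^{p/2} + (λ_min(Q)/2) t over (x, t) ∈ ℝⁿ × ℝ subject to l_i ≤ a_iᵀx + b_i ≤ u_i for i = 1, …, m and xᵀx ≤ t. Suppose the dimension of the span of span{a₁, …, a_m} ∪ R(Q − λ_min(Q) I_n) is at most n − 1. Then x* is a global minimizer of (p-RS_m) if and only if (x*, x*ᵀx*) is a global minimizer of the relaxation. -/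

import Mathlib

open Matrix

private theorem exists_orth_aux (n : ℕ) (hn : 0 < n) (V : Submodule ℝ (Fin n → ℝ))
    (h : Module.finrank ℝ V ≤ n - 1) :
    ∃ d : Fin n → ℝ, d ≠ 0 ∧ ∀ w ∈ V, w ⬝ᵥ d = 0 := by
  let e : EuclideanSpace ℝ (Fin n) ≃ₗ[ℝ] (Fin n → ℝ) :=
    (EuclideanSpace.equiv (Fin n) ℝ).toLinearEquiv
  let V' : Submodule ℝ (EuclideanSpace ℝ (Fin n)) := V.map (e.symm : (Fin n → ℝ) →ₗ[ℝ] EuclideanSpace ℝ (Fin n))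
  have hrk : Module.finrank ℝ V' = Module.finrank ℝ V :=
    LinearEquiv.finrank_map_eq e.symm V
  have hsum := V'.finrank_add_finrank_orthogonal
  rw [finrank_euclideanSpace_fin] at hsum
  have hpos : 0 < Module.finrank ℝ V'ᗮ := by omega
  have hne : V'ᗮ ≠ ⊥ := fun hb => by rw [hb, finrank_bot] at hpos; exact lt_irrefl _ hpos
  obtain ⟨d', hd'mem, hd'ne⟩ := Submodule.exists_mem_ne_zero_of_ne_bot hne
  refine ⟨e d', fun hz => hd'ne (e.injective (by simpa using hz)), fun w hw => ?_⟩
  have := (Submodule.mem_orthogonal V' d').mp hd'mem (e.symm w) ⟨w, hw, rfl⟩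
  simpa [PiLp.inner_apply, RCLike.inner_apply, dotProduct, e, mul_comm] using this

private theorem exists_root_aux (D B C cd : ℝ) (hD : 0 < D) (hC : C ≤ 0) :
    ∃ s : ℝ, D * s ^ 2 + 2 * B * s + C = 0 ∧ s * cd ≤ 0 := by
  set r := Real.sqrt (B ^ 2 - D * C) with hrdef
  have hnn : 0 ≤ B ^ 2 - D * C := by nlinarith [sq_nonneg B]
  have hr2 : r ^ 2 = B ^ 2 - D * C := Real.sq_sqrt hnn
  have hr0 : 0 ≤ r := Real.sqrt_nonneg _
  have hDne : D ≠ 0 := ne_of_gt hD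
  rcases le_or_gt 0 cd with hcd | hcd
  · refine ⟨(-B - r) / D, ?_, ?_⟩
    · field_simp
      nlinarith [hr2]
    · have hnum : -B - r ≤ 0 := by nlinarith [hr2, mul_nonneg hD.le (neg_nonneg.mpr hC)]
      exact mul_nonpos_of_nonpos_of_nonneg (div_nonpos_of_nonpos_of_nonneg hnum hD.le) hcd
  · refine ⟨(-B + r) / D, ?_, ?_⟩
    · field_simp
      nlinarith [hr2]
    · have hnum : 0 ≤ -B + r := by nlinarith [hr2, mul_nonneg hD.le (neg_nonneg.mpr hC)]
      exact mul_nonpos_of_nonneg_of_nonpos (div_nonneg hnum hD.le) hcd.le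

/-- equivalence of global minimizers of the extended p-regularized
subproblem (p-RS_m) and its convex relaxation, under the dimension condition.
`lmin` is the smallest eigenvalue of `Q`, and `‖x‖^p = (xᵀx)^(p/2)` (real power). -/
theorem stmt13 (n m : ℕ) (Q : Matrix (Fin n) (Fin n) ℝ) (hQsymm : Q.IsSymm) (lmin : ℝ)
    (hlmin : IsGreatest {c : ℝ | (Q - c • (1 : Matrix (Fin n) (Fin n) ℝ)).PosSemidef} lmin)
    (c : Fin n → ℝ) (a : Fin m → Fin n → ℝ) (b l u : Fin m → ℝ) (hlu : ∀ i, l i ≤ u i)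
    (σ : ℝ) (hσ : 0 < σ) (p : ℝ) (hp : 2 < p)
    (hdim : Module.finrank ℝ
      ↥(Submodule.span ℝ (Set.range a) ⊔
          LinearMap.range (Q - lmin • (1 : Matrix (Fin n) (Fin n) ℝ)).mulVecLin) ≤ n - 1)
    (xs : Fin n → ℝ) :
    -- `xs` globally solves (p-RS_m)
    ((∀ i, l i ≤ a i ⬝ᵥ xs + b i ∧ a i ⬝ᵥ xs + b i ≤ u i) ∧
      (∀ x : Fin n → ℝ, (∀ i, l i ≤ a i ⬝ᵥ x + b i ∧ a i ⬝ᵥ x + b i ≤ u i) →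
        (1 / 2) * (xs ⬝ᵥ (Q *ᵥ xs)) + c ⬝ᵥ xs + (σ / p) * (xs ⬝ᵥ xs) ^ (p / 2) ≤
          (1 / 2) * (x ⬝ᵥ (Q *ᵥ x)) + c ⬝ᵥ x + (σ / p) * (x ⬝ᵥ x) ^ (p / 2))) ↔
    -- `(xs, xsᵀxs)` globally solves the relaxation
    (((∀ i, l i ≤ a i ⬝ᵥ xs + b i ∧ a i ⬝ᵥ xs + b i ≤ u i) ∧ xs ⬝ᵥ xs ≤ xs ⬝ᵥ xs) ∧
      (∀ (x : Fin n → ℝ) (t : ℝ),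
        ((∀ i, l i ≤ a i ⬝ᵥ x + b i ∧ a i ⬝ᵥ x + b i ≤ u i) ∧ x ⬝ᵥ x ≤ t) →
        (1 / 2) * (xs ⬝ᵥ ((Q - lmin • (1 : Matrix (Fin n) (Fin n) ℝ)) *ᵥ xs)) + c ⬝ᵥ xs
            + (σ / p) * (xs ⬝ᵥ xs) ^ (p / 2) + (lmin / 2) * (xs ⬝ᵥ xs) ≤
          (1 / 2) * (x ⬝ᵥ ((Q - lmin • (1 : Matrix (Fin n) (Fin n) ℝ)) *ᵥ x)) + c ⬝ᵥ x
            + (σ / p) * t ^ (p / 2) + (lmin / 2) * t)) := by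
  set M : Matrix (Fin n) (Fin n) ℝ := Q - lmin • (1 : Matrix (Fin n) (Fin n) ℝ) with hMdef
  -- key identity between the two quadratic forms
  have hQid : ∀ y : Fin n → ℝ, y ⬝ᵥ (Q *ᵥ y) = y ⬝ᵥ (M *ᵥ y) + lmin * (y ⬝ᵥ y) := by
    intro y
    simp [hMdef, sub_mulVec, smul_mulVec, dotProduct_sub, dotProduct_smul, smul_eq_mul]
  -- M is symmetric
  have hMsymm : Mᵀ = M := by
    simp [hMdef, Matrix.transpose_sub, Matrix.transpose_smul, hQsymm.eq]
  have hdot : ∀ v w : Fin n → ℝ, v ⬝ᵥ (M *ᵥ w) = (M *ᵥ v) ⬝ᵥ w := by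
    intro v w
    rw [dotProduct_mulVec, ← mulVec_transpose, hMsymm]
  constructor
  · rintro ⟨hfeas, hmin⟩
    refine ⟨⟨hfeas, le_refl _⟩, ?_⟩
    rintro x t ⟨hxf, hxt⟩
    -- n is positive (otherwise the set of c with Q - cI PSD is all of ℝ)
    have hn : 0 < n := by
      by_contra h
      push_neg at h
      interval_cases n
      have hmem : (lmin + 1) ∈
          {c : ℝ | (Q - c • (1 : Matrix (Fin 0) (Fin 0) ℝ)).PosSemidef} :=
        ⟨by ext i j; exact i.elim0, by intro x; simp [Finsupp.sum, Finset.eq_empty_of_isEmpty x.support]⟩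
      have := hlmin.2 hmem
      linarith
    -- get an orthogonal direction d
    obtain ⟨d, hdne, horth⟩ := exists_orth_aux n hn _ hdim
    have ha : ∀ i, a i ⬝ᵥ d = 0 := fun i =>
      horth (a i) (Submodule.mem_sup_left (Submodule.subset_span ⟨i, rfl⟩))
    have hMd : M *ᵥ d = 0 := by
      have h1 : (M *ᵥ (M *ᵥ d)) ⬝ᵥ d = 0 :=
        horth _ (Submodule.mem_sup_right (LinearMap.mem_range.mpr ⟨M *ᵥ d, rfl⟩))
      have h2 : (M *ᵥ d) ⬝ᵥ (M *ᵥ d) = 0 := by rw [hdot]; exact h1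
      exact dotProduct_self_eq_zero.mp h2
    have hD : 0 < d ⬝ᵥ d := by
      have := (dotProduct_self_star_pos_iff (v := d)).mpr hdne
      simpa using this
    obtain ⟨s, hq, hscd⟩ :=
      exists_root_aux (d ⬝ᵥ d) (x ⬝ᵥ d) (x ⬝ᵥ x - t) (c ⬝ᵥ d) hD (by linarith)
    set x' : Fin n → ℝ := x + s • d with hx'def
    have hx'feas : ∀ i, l i ≤ a i ⬝ᵥ x' + b i ∧ a i ⬝ᵥ x' + b i ≤ u i := by
      intro i
      have : a i ⬝ᵥ x' = a i ⬝ᵥ x := by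
        simp [hx'def, dotProduct_add, dotProduct_smul, ha i]
      rw [this]; exact hxf i
    have hx'sq : x' ⬝ᵥ x' = t := by
      have hexp : x' ⬝ᵥ x' = x ⬝ᵥ x + 2 * (x ⬝ᵥ d) * s + (d ⬝ᵥ d) * s ^ 2 := by
        simp [hx'def, dotProduct_add, add_dotProduct, dotProduct_smul, smul_dotProduct,
          smul_eq_mul, dotProduct_comm d x]
        ring
      rw [hexp]; linarith
    have hMx' : x' ⬝ᵥ (M *ᵥ x') = x ⬝ᵥ (M *ᵥ x) := by
      have hMv : M *ᵥ x' = M *ᵥ x := by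
        simp [hx'def, mulVec_add, mulVec_smul, hMd]
      rw [hMv]
      have hdMx : d ⬝ᵥ (M *ᵥ x) = 0 := by rw [hdot, hMd]; simp
      simp [hx'def, add_dotProduct, smul_dotProduct, smul_eq_mul, hdMx]
    have hcx' : c ⬝ᵥ x' = c ⬝ᵥ x + s * (c ⬝ᵥ d) := by
      simp [hx'def, dotProduct_add, dotProduct_smul, smul_eq_mul]
    have hfx' := hmin x' hx'feas
    rw [hQid xs, hQid x', hMx', hx'sq, hcx'] at hfx'
    linarith
  · rintro ⟨⟨hfeas, _⟩, hmin⟩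
    refine ⟨hfeas, fun x hx => ?_⟩
    have := hmin x (x ⬝ᵥ x) ⟨hx, le_refl _⟩
    rw [hQid xs, hQid x]
    linarith
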